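/- Let F : ℝ^d → ℝ be a linear functional, m : ℝ^d → ℝ a convex function positive on ℝ^d \ {0}, and q : ℝ^d → ℝ a positive definite quadratic form. Fix v, w ∈ ℝ^d \ {0} that are not positive scalar multiples of each other, with F(v) < 0 and F(w) < 0, and let t ∈ (0,1). Then F(tv+(1-t)w)/m(tv+(1-t)w) ≤ max(F(v)/m(v), F(w)/m(w)), and F(tv+(1-t)w)/√q(tv+(1-t)w) < max(F(v)/√q(v), F(w)/√q(w)). -/
import Mathlib

open QuadraticMap in
/-- Strict Cauchy–Schwarz for the polar form of a positive definite quadratic form,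
when `w` is not a positive multiple of `v`. -/
lemma polar_lt {d : ℕ} (q : QuadraticForm ℝ (Fin d → ℝ))
    (hqpos : ∀ x : Fin d → ℝ, x ≠ 0 → 0 < q x)
    (v w : Fin d → ℝ) (hv : v ≠ 0) (hw : w ≠ 0)
    (hprop : ¬ ∃ c : ℝ, 0 < c ∧ w = c • v) :
    polar q v w < 2 * Real.sqrt (q v) * Real.sqrt (q w) := by
  have hqv := hqpos v hv
  have hqw := hqpos w hw
  have hs : 0 < 2 * Real.sqrt (q v) * Real.sqrt (q w) := by positivity
  by_cases hdep : ∃ c : ℝ, w = c • v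
  · obtain ⟨c, rfl⟩ := hdep
    have hc : c ≤ 0 := by
      by_contra h
      exact hprop ⟨c, lt_of_not_ge h, rfl⟩
    have : polar q v (c • v) = c * (2 * q v) := by
      rw [polar_smul_right, polar_self, smul_eq_mul, nsmul_eq_mul]
      push_cast
      ring
    rw [this]
    have : c * (2 * q v) ≤ 0 := mul_nonpos_of_nonpos_of_nonneg hc (by linarith)
    linarith
  · -- linearly independent case
    set P := polar q v w with hP
    have key : ∀ s : ℝ, 0 < q v + s * P + s ^ 2 * q w := by
      intro s
      have hne : v + s • w ≠ 0 := by
        intro h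
        rcases eq_or_ne s 0 with rfl | hs0
        · simp at h; exact hv h
        · apply hdep
          refine ⟨-s⁻¹, ?_⟩
          have : v = -(s • w) := by
            rwa [add_eq_zero_iff_eq_neg] at h
          rw [this]
          simp [smul_smul, hs0]
      have := hqpos _ hne
      have hexp : q (v + s • w) = q v + s * P + s ^ 2 * q w := by
        have hdef : polar (⇑q) v (s • w) = q (v + s • w) - q v - q (s • w) := rfl
        have h2 : polar (⇑q) v (s • w) = s * P := by
          rw [hP, polar_smul_right, smul_eq_mul]
        have h3 : q (s • w) = s * s * q w := by
          rw [QuadraticMap.map_smul, smul_eq_mul]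
        rw [h2, h3] at hdef
        linarith [sq_nonneg s, hdef]
      linarith [hexp ▸ this]
    have h1 := key (-(P / (2 * q w)))
    have hsq : P ^ 2 < 4 * (q v * q w) := by
      have h2 : q v - P ^ 2 / (4 * q w) > 0 := by
        have := h1
        field_simp at this ⊢
        nlinarith
      have : P ^ 2 / (4 * q w) < q v := by linarith
      calc P ^ 2 = P ^ 2 / (4 * q w) * (4 * q w) := by field_simp
        _ < q v * (4 * q w) := by
            apply mul_lt_mul_of_pos_right this; linarith
        _ = 4 * (q v * q w) := by ring
    have habs : |P| < 2 * Real.sqrt (q v) * Real.sqrt (q w) := by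
      have h4 : (2 * Real.sqrt (q v) * Real.sqrt (q w)) ^ 2 = 4 * (q v * q w) := by
        rw [mul_pow, mul_pow, Real.sq_sqrt hqv.le, Real.sq_sqrt hqw.le]; ring
      exact abs_lt.mpr (abs_lt_of_sq_lt_sq' (by rw [h4]; exact hsq) hs.le)
    exact lt_of_le_of_lt (le_abs_self P) habs

theorem stmt0 {d : ℕ} (F : (Fin d → ℝ) →ₗ[ℝ] ℝ) (m : (Fin d → ℝ) → ℝ)
    (hmconv : ConvexOn ℝ Set.univ m) (hmpos : ∀ x : Fin d → ℝ, x ≠ 0 → 0 < m x)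
    (q : QuadraticForm ℝ (Fin d → ℝ)) (hqpos : ∀ x : Fin d → ℝ, x ≠ 0 → 0 < q x)
    (v w : Fin d → ℝ) (hv : v ≠ 0) (hw : w ≠ 0)
    (hprop : ¬ ∃ c : ℝ, 0 < c ∧ w = c • v)
    (hFv : F v < 0) (hFw : F w < 0)
    (t : ℝ) (ht0 : 0 < t) (ht1 : t < 1) :
    F (t • v + (1 - t) • w) / m (t • v + (1 - t) • w) ≤ max (F v / m v) (F w / m w) ∧
    F (t • v + (1 - t) • w) / Real.sqrt (q (t • v + (1 - t) • w)) <
      max (F v / Real.sqrt (q v)) (F w / Real.sqrt (q w)) := by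
  set u := t • v + (1 - t) • w with hu
  have ht1' : 0 < 1 - t := by linarith
  have hFu : F u = t * F v + (1 - t) * F w := by simp [hu]
  have hFuneg : F u < 0 := by
    rw [hFu]
    nlinarith
  have hune : u ≠ 0 := by
    intro h
    rw [h, map_zero] at hFuneg
    exact lt_irrefl _ hFuneg
  have hmv := hmpos v hv
  have hmw := hmpos w hw
  have hmu := hmpos u hune
  have hqv := hqpos v hv
  have hqw := hqpos w hw
  have hqu := hqpos u hune
  constructor
  · set M := max (F v / m v) (F w / m w) with hM
    have hMneg : M < 0 := by
      rw [hM]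
      apply max_lt <;> [exact div_neg_of_neg_of_pos hFv hmv; exact div_neg_of_neg_of_pos hFw hmw]
    have h1 : F v ≤ M * m v := by
      have : F v / m v ≤ M := le_max_left _ _
      rwa [div_le_iff₀ hmv] at this
    have h2 : F w ≤ M * m w := by
      have : F w / m w ≤ M := le_max_right _ _
      rwa [div_le_iff₀ hmw] at this
    have hconv : m u ≤ t * m v + (1 - t) * m w :=
      hmconv.2 (Set.mem_univ v) (Set.mem_univ w) ht0.le ht1'.le (by ring)
    rw [div_le_iff₀ hmu]
    have : F u ≤ M * (t * m v + (1 - t) * m w) := by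
      rw [hFu]
      nlinarith
    nlinarith
  · set N := max (F v / Real.sqrt (q v)) (F w / Real.sqrt (q w)) with hN
    have hsv : 0 < Real.sqrt (q v) := Real.sqrt_pos.mpr hqv
    have hsw : 0 < Real.sqrt (q w) := Real.sqrt_pos.mpr hqw
    have hsu : 0 < Real.sqrt (q u) := Real.sqrt_pos.mpr hqu
    have hNneg : N < 0 := by
      apply max_lt <;> [exact div_neg_of_neg_of_pos hFv hsv; exact div_neg_of_neg_of_pos hFw hsw]
    have h1 : F v ≤ N * Real.sqrt (q v) := by
      have : F v / Real.sqrt (q v) ≤ N := le_max_left _ _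
      rwa [div_le_iff₀ hsv] at this
    have h2 : F w ≤ N * Real.sqrt (q w) := by
      have : F w / Real.sqrt (q w) ≤ N := le_max_right _ _
      rwa [div_le_iff₀ hsw] at this
    -- strict triangle inequality
    have hP := polar_lt q hqpos v w hv hw hprop
    have hqexp : q u = t ^ 2 * q v + t * (1 - t) * QuadraticMap.polar q v w
        + (1 - t) ^ 2 * q w := by
      have hdef : QuadraticMap.polar (⇑q) (t • v) ((1 - t) • w)
          = q (t • v + (1 - t) • w) - q (t • v) - q ((1 - t) • w) := rfl
      have h2 : QuadraticMap.polar (⇑q) (t • v) ((1 - t) • w)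
          = t * (1 - t) * QuadraticMap.polar (⇑q) v w := by
        rw [QuadraticMap.polar_smul_left, QuadraticMap.polar_smul_right,
          smul_eq_mul, smul_eq_mul]
        ring
      have h3 : q (t • v) = t * t * q v := by
        rw [QuadraticMap.map_smul, smul_eq_mul]
      have h4 : q ((1 - t) • w) = (1 - t) * (1 - t) * q w := by
        rw [QuadraticMap.map_smul, smul_eq_mul]
      rw [h2, h3, h4] at hdef
      rw [hu]
      linarith
    have htri : Real.sqrt (q u) < t * Real.sqrt (q v) + (1 - t) * Real.sqrt (q w) := by
      have hq2 : q u < (t * Real.sqrt (q v) + (1 - t) * Real.sqrt (q w)) ^ 2 := by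
        have hexp2 : (t * Real.sqrt (q v) + (1 - t) * Real.sqrt (q w)) ^ 2
            = t ^ 2 * q v + t * (1 - t) * (2 * Real.sqrt (q v) * Real.sqrt (q w))
              + (1 - t) ^ 2 * q w := by
          rw [add_sq]
          rw [mul_pow, mul_pow, Real.sq_sqrt hqv.le, Real.sq_sqrt hqw.le]
          ring
        rw [hqexp, hexp2]
        have hpos : 0 < t * (1 - t) := by positivity
        nlinarith
      have := Real.sqrt_lt_sqrt hqu.le hq2
      rwa [Real.sqrt_sq (by positivity)] at this
    rw [div_lt_iff₀ hsu]
    have hstep : F u ≤ N * (t * Real.sqrt (q v) + (1 - t) * Real.sqrt (q w)) := by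
      rw [hFu]; nlinarith
    calc F u ≤ N * (t * Real.sqrt (q v) + (1 - t) * Real.sqrt (q w)) := hstep
      _ < N * Real.sqrt (q u) := by
          apply mul_lt_mul_of_neg_left htri hNneg
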